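/- For $0<q<1$, integer $N\ge0$, $m\ge 0$, and parameters $b,c,d$, the monic $q$-Racah polynomial $\check{P}^{\text{monic}}_n(x) = \sum_{k=0}^n \frac{(bq^k, cq^k, q^{k-N};q)_{n-k}}{(\tilde{d}q^{n+k};q)_{n-k}} \frac{(q^{-n}, q^{-x}, dq^x;q)_k}{(q;q)_k} q^k$ (with $\tilde{d} = bcd^{-1}q^{-N-1}$ and $(a_1,\ldots,a_r;q)_k = \prod_i (a_i;q)_k$) satisfies, at degree $n = N+1+m$, the factorisation $\check{P}^{\text{monic}}_{N+1+m}(x) = (-1)^{N+1} q^{-\binom{N+1}{2}} (q^{-x};q)_{N+1} (dq^x;q)_{N+1} \cdot q^{-(N+1)m} \sum_{l=0}^m \frac{(bq^{N+1+l}, cq^{N+1+l}, q^{N+2+l};q)_{m-l}}{(\tilde{d}q^{2(N+1)+m+l};q)_{m-l}} \frac{(q^{-m}, q^{-x+N+1}, dq^{x+N+1};q)_l}{(q;q)_l} q^l$, as an identity of Laurent polynomials in $z = q^{-x}$ (assuming the denominators $(\tilde{d}q^{j};q)_k$ are nonzero). -/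

import Mathlib

/-- q-Pochhammer symbol `(a;q)_n`. -/
noncomputable def qpoch (a q : ℝ) (n : ℕ) : ℝ := ∏ j ∈ Finset.range n, (1 - a * q ^ j)

/-- The parameter `d̃ = b c d⁻¹ q^{-N-1}`. -/
noncomputable def qRacahTd (q b c d : ℝ) (N : ℕ) : ℝ := b * c * d⁻¹ * q⁻¹ ^ (N + 1)

/-- Monic q-Racah polynomial, as a Laurent polynomial in `z = q^{-x}` (so that
`q^x = z⁻¹` and `dq^x = d z⁻¹`):
`P^monic_n = ∑_{k=0}^n ((bq^k,cq^k,q^{k-N};q)_{n-k}/(d̃q^{n+k};q)_{n-k}) ·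
((q^{-n};q)_k (z;q)_k (dz⁻¹;q)_k/(q;q)_k) q^k`. -/
noncomputable def qRacahMonic (q b c d : ℝ) (N n : ℕ) (z : ℝ) : ℝ :=
  ∑ k ∈ Finset.range (n + 1),
    qpoch (b * q ^ k) q (n - k) * qpoch (c * q ^ k) q (n - k) *
        qpoch (q⁻¹ ^ N * q ^ k) q (n - k) / qpoch (qRacahTd q b c d N * q ^ (n + k)) q (n - k) *
      (qpoch (q⁻¹ ^ n) q k * qpoch z q k * qpoch (d * z⁻¹) q k / qpoch q q k) * q ^ k

/-- Diophantine factorisation of the monic q-Racah polynomial at degree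
`n = N+1+m`. -/
private lemma qpoch_add' (a q : ℝ) (m n : ℕ) :
    qpoch a q (m + n) = qpoch a q m * qpoch (a * q ^ m) q n := by
  unfold qpoch
  rw [Finset.prod_range_add]
  congr 1
  exact Finset.prod_congr rfl fun j _ => by rw [pow_add]; ring

private lemma qpoch_ne_zero {a q : ℝ} {n : ℕ} (h : ∀ j, a * q ^ j ≠ 1) : qpoch a q n ≠ 0 := by
  unfold qpoch
  exact Finset.prod_ne_zero_iff.2 fun j _ => sub_ne_zero.2 (Ne.symm (h j))

private lemma qq_ne_zero {q : ℝ} (hq0 : 0 < q) (hq1 : q < 1) (n : ℕ) : qpoch q q n ≠ 0 := by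
  apply qpoch_ne_zero
  intro j
  have h : q * q ^ j = q ^ (j + 1) := by ring
  rw [h]
  exact ne_of_lt (pow_lt_one₀ hq0.le hq1 (Nat.succ_ne_zero j))

private lemma qpoch_inv_pow {q : ℝ} (hq : q ≠ 0) {n k : ℕ} (hk : k ≤ n) :
    qpoch (q⁻¹ ^ n) q k =
      (-1) ^ k * q⁻¹ ^ (∑ j ∈ Finset.range k, (n - j)) * qpoch (q ^ (n + 1 - k)) q k := by
  unfold qpoch
  have h1 : ∀ j ∈ Finset.range k, (1 - q⁻¹ ^ n * q ^ j)
      = (-1) * q⁻¹ ^ (n - j) * (1 - q ^ (n - j)) := by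
    intro j hj
    have hj' : j < k := Finset.mem_range.1 hj
    have h3 : q⁻¹ ^ n = q⁻¹ ^ (n - j) * q⁻¹ ^ j := by rw [← pow_add]; congr 1; omega
    have h2 : q⁻¹ ^ n * q ^ j = q⁻¹ ^ (n - j) := by
      rw [h3, mul_assoc, inv_pow q j, inv_mul_cancel₀ (pow_ne_zero _ hq), mul_one]
    rw [h2]
    have h4 : q⁻¹ ^ (n - j) * q ^ (n - j) = 1 := by
      rw [inv_pow, inv_mul_cancel₀ (pow_ne_zero _ hq)]
    linear_combination -h4
  rw [Finset.prod_congr rfl h1]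
  simp only [Finset.prod_mul_distrib, Finset.prod_const, Finset.card_range,
    Finset.prod_pow_eq_pow_sum]
  congr 1
  conv_rhs => rw [← Finset.prod_range_reflect]
  refine Finset.prod_congr rfl fun j hj => ?_
  have hj' : j < k := Finset.mem_range.1 hj
  rw [← pow_add]
  congr 2
  omega

private lemma sum_exp (N m l : ℕ) (hl : l ≤ m) :
    ∑ j ∈ Finset.range (N + 1 + l), (N + 1 + m - j) =
      ∑ j ∈ Finset.range l, (m - j) + ((N + 1).choose 2 + (N + 1) * m + (N + 1)) := by
  induction N with
  | zero =>
      rw [show 0 + 1 + l = l + 1 by omega, Finset.sum_range_succ']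
      rw [Finset.sum_congr rfl (fun j _ => show 0 + 1 + m - (j + 1) = m - j by omega)]
      rw [show Nat.choose (0 + 1) 2 = 0 from rfl]
      set S := ∑ j ∈ Finset.range l, (m - j)
      omega
  | succ N ih =>
      rw [show N + 1 + 1 + l = (N + 1 + l) + 1 by omega, Finset.sum_range_succ']
      rw [Finset.sum_congr rfl
        (fun j _ => show N + 1 + 1 + m - (j + 1) = N + 1 + m - j by omega), ih]
      have hc : (N + 1 + 1).choose 2 = (N + 1).choose 2 + (N + 1) := by
        simp [Nat.choose_succ_succ, Nat.choose_one_right]; omega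
      rw [hc]
      have hm : (N + 1 + 1) * m = (N + 1) * m + m := by ring
      rw [hm]
      set S := ∑ j ∈ Finset.range l, (m - j)
      omega
private lemma td_ne {q b c d : ℝ} {N : ℕ} (hden : ∀ l : ℕ, qRacahTd q b c d N * q ^ l ≠ 1)
    (s r : ℕ) : qpoch (qRacahTd q b c d N * q ^ s) q r ≠ 0 :=
  qpoch_ne_zero fun j => by rw [mul_assoc, ← pow_add]; exact hden (s + j)

theorem qRacah_monic_factorisation (q : ℝ) (hq0 : 0 < q) (hq1 : q < 1)
    (N m : ℕ) (b c d : ℝ) (hd : d ≠ 0)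
    (hden : ∀ l : ℕ, qRacahTd q b c d N * q ^ l ≠ 1)
    (z : ℝ) (hz : z ≠ 0) :
    qRacahMonic q b c d N (N + 1 + m) z =
      (-1) ^ (N + 1) * q⁻¹ ^ ((N + 1).choose 2) *
          qpoch z q (N + 1) * qpoch (d * z⁻¹) q (N + 1) * q⁻¹ ^ ((N + 1) * m) *
        ∑ l ∈ Finset.range (m + 1),
          qpoch (b * q ^ (N + 1 + l)) q (m - l) * qpoch (c * q ^ (N + 1 + l)) q (m - l) *
              qpoch (q ^ (N + 2 + l)) q (m - l) /
                qpoch (qRacahTd q b c d N * q ^ (2 * (N + 1) + m + l)) q (m - l) *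
            (qpoch (q⁻¹ ^ m) q l * qpoch (z * q ^ (N + 1)) q l *
              qpoch (d * z⁻¹ * q ^ (N + 1)) q l / qpoch q q l) * q ^ l := by
  have hq : q ≠ 0 := ne_of_gt hq0
  have hqq : ∀ n : ℕ, qpoch q q n ≠ 0 := fun n => qq_ne_zero hq0 hq1 n
  unfold qRacahMonic
  rw [show N + 1 + m + 1 = (N + 1) + (m + 1) by omega, Finset.sum_range_add]
  have hzterm : ∀ k ∈ Finset.range (N + 1),
      qpoch (b * q ^ k) q (N + 1 + m - k) * qpoch (c * q ^ k) q (N + 1 + m - k) *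
          qpoch (q⁻¹ ^ N * q ^ k) q (N + 1 + m - k) /
          qpoch (qRacahTd q b c d N * q ^ (N + 1 + m + k)) q (N + 1 + m - k) *
        (qpoch (q⁻¹ ^ (N + 1 + m)) q k * qpoch z q k * qpoch (d * z⁻¹) q k / qpoch q q k) *
        q ^ k = 0 := by
    intro k hk
    have hk' : k < N + 1 := Finset.mem_range.1 hk
    have hG : qpoch (q⁻¹ ^ N * q ^ k) q (N + 1 + m - k) = 0 := by
      unfold qpoch
      refine Finset.prod_eq_zero (i := N - k)
        (Finset.mem_range.2 (show N - k < N + 1 + m - k by omega)) ?_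
      have h1 : q⁻¹ ^ N * q ^ k * q ^ (N - k) = 1 := by
        rw [mul_assoc, ← pow_add, show k + (N - k) = N by omega, inv_pow,
            inv_mul_cancel₀ (pow_ne_zero _ hq)]
      rw [h1]; ring
    rw [hG]; ring
  rw [Finset.sum_eq_zero hzterm, zero_add, Finset.mul_sum]
  refine Finset.sum_congr rfl fun i hi => ?_
  have hi' : i ≤ m := by have := Finset.mem_range.1 hi; omega
  rw [show N + 1 + m - (N + 1 + i) = m - i by omega,
      show N + 1 + m + (N + 1 + i) = 2 * (N + 1) + m + i by omega]
  have hGarg : q⁻¹ ^ N * q ^ (N + 1 + i) = q ^ (i + 1) := by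
    rw [show N + 1 + i = N + (i + 1) by omega, pow_add, ← mul_assoc, inv_pow,
        inv_mul_cancel₀ (pow_ne_zero _ hq), one_mul]
  rw [hGarg, qpoch_add' z q (N + 1) i, qpoch_add' (d * z⁻¹) q (N + 1) i]
  have hQn : qpoch (q⁻¹ ^ (N + 1 + m)) q (N + 1 + i) =
      (-1) ^ (N + 1 + i) * q⁻¹ ^ (∑ j ∈ Finset.range i, (m - j) +
        ((N + 1).choose 2 + (N + 1) * m + (N + 1))) *
        qpoch (q ^ (m + 1 - i)) q (N + 1 + i) := by
    rw [qpoch_inv_pow hq (show N + 1 + i ≤ N + 1 + m by omega), sum_exp N m i hi',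
        show N + 1 + m + 1 - (N + 1 + i) = m + 1 - i by omega]
  have hQl : qpoch (q⁻¹ ^ m) q i =
      (-1) ^ i * q⁻¹ ^ (∑ j ∈ Finset.range i, (m - j)) * qpoch (q ^ (m + 1 - i)) q i := by
    rw [qpoch_inv_pow hq hi', show m + 1 - i = m + 1 - i from rfl]
  rw [hQn, hQl]
  -- express the pure-q pochhammers via (q;q)-factorials
  have key : ∀ s t : ℕ, qpoch q q (s + t) = qpoch q q s * qpoch (q ^ (s + 1)) q t := by
    intro s t
    rw [qpoch_add' q q s t, show q * q ^ s = q ^ (s + 1) by ring]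
  have k1 := key (m - i) (N + 1 + i)
  rw [show m - i + (N + 1 + i) = N + 1 + m by omega,
      show m - i + 1 = m + 1 - i by omega] at k1
  have k2 := key (m - i) i
  rw [show m - i + i = m by omega, show m - i + 1 = m + 1 - i by omega] at k2
  have k3 := key i (m - i)
  rw [show i + (m - i) = m by omega] at k3
  have k4 := key (N + 1 + i) (m - i)
  rw [show N + 1 + i + (m - i) = N + 1 + m by omega,
      show N + 1 + i + 1 = N + 2 + i by omega] at k4
  have hP1 : qpoch (q ^ (m + 1 - i)) q (N + 1 + i) =
      qpoch q q (N + 1 + m) / qpoch q q (m - i) := by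
    rw [eq_div_iff (hqq (m - i)), k1]; ring
  have hP2 : qpoch (q ^ (m + 1 - i)) q i = qpoch q q m / qpoch q q (m - i) := by
    rw [eq_div_iff (hqq (m - i)), k2]; ring
  have hG2 : qpoch (q ^ (i + 1)) q (m - i) = qpoch q q m / qpoch q q i := by
    rw [eq_div_iff (hqq i), k3]; ring
  have hP3 : qpoch (q ^ (N + 2 + i)) q (m - i) =
      qpoch q q (N + 1 + m) / qpoch q q (N + 1 + i) := by
    rw [eq_div_iff (hqq (N + 1 + i)), k4]; ring
  rw [hP1, hP2, hG2, hP3]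
  have hD := td_ne hden (2 * (N + 1) + m + i) (m - i)
  have h1 := hqq i
  have h2 := hqq (m - i)
  have h3 := hqq (N + 1 + i)
  have h4 := hqq (N + 1 + m)
  have h5 := hqq m
  simp only [inv_pow]
  field_simp
  ring
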